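/- Let Q ∈ ℂ^{n×n} be Hermitian positive semidefinite and q ∈ ℂⁿ. Consider f(μ) = ‖(Q + μI_n)⁻¹q‖₂² for μ > 0. (a) If q is orthogonal to the null space of Q (equivalently, q lies in the range of Q), then f(μ) → ‖Q†q‖₂² as μ → 0⁺. (b) If q is not orthogonal to the null space of Q, then f(μ) → +∞ as μ → 0⁺. -/

import Mathlib

open Matrix ComplexOrder Filter Topology

/-- The Euclidean norm ‖x‖₂ = √(xᴴx) of a complex vector. -/
noncomputable def eucNorm {n : ℕ} (x : Fin n → ℂ) : ℝ :=
  Real.sqrt ((star x ⬝ᵥ x).re)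

private lemma eucNorm_eq {n : ℕ} (x : Fin n → ℂ) :
    eucNorm x = ‖(WithLp.equiv 2 (Fin n → ℂ)).symm x‖ := by
  have h : star x ⬝ᵥ x =
      inner ℂ ((WithLp.equiv 2 (Fin n → ℂ)).symm x) ((WithLp.equiv 2 (Fin n → ℂ)).symm x) :=
    by rw [dotProduct_comm]; rfl
  rw [eucNorm, h]
  have h2 : (inner ℂ ((WithLp.equiv 2 (Fin n → ℂ)).symm x)
      ((WithLp.equiv 2 (Fin n → ℂ)).symm x) : ℂ).re
      = ‖(WithLp.equiv 2 (Fin n → ℂ)).symm x‖ ^ 2 := by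
    rw [← RCLike.re_to_complex]
    exact inner_self_eq_norm_sq _
  rw [h2, Real.sqrt_sq (norm_nonneg _)]

/-- for Q Hermitian positive semidefinite, consider
f(μ) = ‖(Q + μI)⁻¹q‖₂² for μ > 0.
(a) If q is orthogonal to the null space of Q, i.e. q lies in the range of Q, then
f(μ) → ‖Q†q‖₂² as μ → 0⁺, where Q†q is characterized as the vector x with
Q x = q and x ∈ range Q.
(b) If q is not orthogonal to the null space of Q, then f(μ) → +∞ as μ → 0⁺. -/
theorem trust_region_secular_limit {n : ℕ}
    (Q : Matrix (Fin n) (Fin n) ℂ) (hQ : Q.PosSemidef) (q : Fin n → ℂ) :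
    (∀ x : Fin n → ℂ, Q *ᵥ x = q → (∃ y, Q *ᵥ y = x) →
      Tendsto (fun μ : ℝ => (eucNorm ((Q + (μ : ℂ) • 1)⁻¹ *ᵥ q)) ^ 2)
        (𝓝[>] (0 : ℝ)) (𝓝 ((eucNorm x) ^ 2))) ∧
    ((∃ v : Fin n → ℂ, Q *ᵥ v = 0 ∧ star v ⬝ᵥ q ≠ 0) →
      Tendsto (fun μ : ℝ => (eucNorm ((Q + (μ : ℂ) • 1)⁻¹ *ᵥ q)) ^ 2)
        (𝓝[>] (0 : ℝ)) atTop) := by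
  classical
  set T : (Fin n → ℂ) → EuclideanSpace ℂ (Fin n) := fun z => (WithLp.equiv 2 (Fin n → ℂ)).symm z with hT
  -- Positive definiteness of Q + μ•1 for μ > 0
  have hpd : ∀ μ : ℝ, 0 < μ → (Q + (μ : ℂ) • 1).PosDef := by
    intro μ hμ
    refine Matrix.PosDef.posSemidef_add hQ ?_
    rw [Matrix.smul_one_eq_diagonal]
    exact Matrix.posDef_diagonal_iff.mpr fun _ => Complex.zero_lt_real.mpr hμ
  have hdet : ∀ μ : ℝ, 0 < μ → IsUnit (Q + (μ : ℂ) • 1).det := fun μ hμ =>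
    (Matrix.isUnit_iff_isUnit_det _).mp (hpd μ hμ).isUnit
  have hAinv : ∀ μ : ℝ, 0 < μ → ∀ z : Fin n → ℂ,
      (Q + (μ : ℂ) • 1) *ᵥ ((Q + (μ : ℂ) • 1)⁻¹ *ᵥ z) = z := by
    intro μ hμ z
    rw [Matrix.mulVec_mulVec, Matrix.mul_nonsing_inv _ (hdet μ hμ), Matrix.one_mulVec]
  have hAinv' : ∀ μ : ℝ, 0 < μ → ∀ z : Fin n → ℂ,
      (Q + (μ : ℂ) • 1)⁻¹ *ᵥ ((Q + (μ : ℂ) • 1) *ᵥ z) = z := by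
    intro μ hμ z
    rw [Matrix.mulVec_mulVec, Matrix.nonsing_inv_mul _ (hdet μ hμ), Matrix.one_mulVec]
  -- the squared Euclidean norm as re of dot product
  have hsq : ∀ w : Fin n → ℂ, (eucNorm w) ^ 2 = (star w ⬝ᵥ w).re := by
    intro w
    have hnn : (0 : ℝ) ≤ (star w ⬝ᵥ w).re :=
      (Complex.le_def.mp (dotProduct_star_self_nonneg w)).1
    rw [eucNorm, Real.sq_sqrt hnn]
  -- key quantitative bound : μ‖w‖ ≤ ‖(Q+μ)w‖
  have hbound : ∀ μ : ℝ, 0 < μ → ∀ w : Fin n → ℂ,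
      μ * eucNorm w ≤ eucNorm ((Q + (μ : ℂ) • 1) *ᵥ w) := by
    intro μ hμ w
    have expand : star w ⬝ᵥ ((Q + (μ : ℂ) • 1) *ᵥ w)
        = star w ⬝ᵥ (Q *ᵥ w) + (μ : ℂ) * (star w ⬝ᵥ w) := by
      rw [Matrix.add_mulVec, dotProduct_add, Matrix.smul_mulVec,
        Matrix.one_mulVec, dotProduct_smul, smul_eq_mul]
    have hreQ : 0 ≤ (star w ⬝ᵥ (Q *ᵥ w)).re := by
      have := hQ.re_dotProduct_nonneg w
      simpa using this
    have hre : μ * (eucNorm w) ^ 2 ≤ (star w ⬝ᵥ ((Q + (μ : ℂ) • 1) *ᵥ w)).re := by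
      rw [expand, Complex.add_re, Complex.mul_re, Complex.ofReal_re, Complex.ofReal_im,
        zero_mul, sub_zero, hsq w]
      linarith
    have hcs : (star w ⬝ᵥ ((Q + (μ : ℂ) • 1) *ᵥ w)).re
        ≤ eucNorm w * eucNorm ((Q + (μ : ℂ) • 1) *ᵥ w) := by
      have h1 : star w ⬝ᵥ ((Q + (μ : ℂ) • 1) *ᵥ w)
          = inner ℂ (T w) (T ((Q + (μ : ℂ) • 1) *ᵥ w)) :=
        by rw [dotProduct_comm]; rfl
      rw [h1, eucNorm_eq, eucNorm_eq, ← RCLike.re_to_complex]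
      exact re_inner_le_norm _ _
    rcases eq_or_lt_of_le (show (0:ℝ) ≤ eucNorm w from Real.sqrt_nonneg _) with h0 | h0
    · rw [← h0, mul_zero]
      exact Real.sqrt_nonneg _
    · have h1 : μ * (eucNorm w) ^ 2 ≤ eucNorm w * eucNorm ((Q + (μ : ℂ) • 1) *ᵥ w) :=
        le_trans hre hcs
      have h2 : eucNorm w * (μ * eucNorm w) ≤ eucNorm w * eucNorm ((Q + (μ : ℂ) • 1) *ᵥ w) := by
        nlinarith [h1]
      exact le_of_mul_le_mul_left h2 h0
  refine ⟨?_, ?_⟩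
  · -- part (a)
    intro x hx ⟨y, hy⟩
    -- identity: (Q+μ)⁻¹ q = x - μ y + μ² (Q+μ)⁻¹ y
    have key : ∀ μ : ℝ, 0 < μ →
        (Q + (μ : ℂ) • 1)⁻¹ *ᵥ q
          = x - (μ : ℂ) • y + ((μ : ℂ) ^ 2) • ((Q + (μ : ℂ) • 1)⁻¹ *ᵥ y) := by
      intro μ hμ
      have hAx : (Q + (μ : ℂ) • 1) *ᵥ (x - (μ : ℂ) • y + ((μ : ℂ) ^ 2) • ((Q + (μ : ℂ) • 1)⁻¹ *ᵥ y)) = q := by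
        rw [Matrix.mulVec_add, Matrix.mulVec_sub, Matrix.mulVec_smul, Matrix.mulVec_smul,
          hAinv μ hμ y]
        have h1 : (Q + (μ : ℂ) • 1) *ᵥ x = q + (μ : ℂ) • x := by
          rw [Matrix.add_mulVec, hx, Matrix.smul_mulVec, Matrix.one_mulVec]
        have h2 : (Q + (μ : ℂ) • 1) *ᵥ y = x + (μ : ℂ) • y := by
          rw [Matrix.add_mulVec, hy, Matrix.smul_mulVec, Matrix.one_mulVec]
        rw [h1, h2]
        module
      conv_lhs => rw [← hAx, hAinv' μ hμ]
    -- distance bound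
    have hdist : ∀ μ : ℝ, 0 < μ →
        dist (T ((Q + (μ : ℂ) • 1)⁻¹ *ᵥ q)) (T x) ≤ 2 * μ * eucNorm y := by
      intro μ hμ
      have hdiff : (Q + (μ : ℂ) • 1)⁻¹ *ᵥ q - x
          = (-(μ : ℂ)) • y + ((μ : ℂ) ^ 2) • ((Q + (μ : ℂ) • 1)⁻¹ *ᵥ y) := by
        rw [key μ hμ]; module
      have hTdist : dist (T ((Q + (μ : ℂ) • 1)⁻¹ *ᵥ q)) (T x)
          = ‖T ((Q + (μ : ℂ) • 1)⁻¹ *ᵥ q - x)‖ := by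
        rw [dist_eq_norm]; rfl
      rw [hTdist, hdiff]
      have hsplit : T ((-(μ : ℂ)) • y + ((μ : ℂ) ^ 2) • ((Q + (μ : ℂ) • 1)⁻¹ *ᵥ y))
          = (-(μ : ℂ)) • T y + ((μ : ℂ) ^ 2) • T ((Q + (μ : ℂ) • 1)⁻¹ *ᵥ y) := rfl
      rw [hsplit]
      have hb : μ * eucNorm ((Q + (μ : ℂ) • 1)⁻¹ *ᵥ y) ≤ eucNorm y := by
        have := hbound μ hμ ((Q + (μ : ℂ) • 1)⁻¹ *ᵥ y)
        rwa [hAinv μ hμ y] at this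
      calc ‖(-(μ : ℂ)) • T y + ((μ : ℂ) ^ 2) • T ((Q + (μ : ℂ) • 1)⁻¹ *ᵥ y)‖
          ≤ ‖(-(μ : ℂ)) • T y‖ + ‖((μ : ℂ) ^ 2) • T ((Q + (μ : ℂ) • 1)⁻¹ *ᵥ y)‖ :=
            norm_add_le _ _
        _ = μ * ‖T y‖ + μ ^ 2 * ‖T ((Q + (μ : ℂ) • 1)⁻¹ *ᵥ y)‖ := by
            rw [norm_smul, norm_smul]
            simp [abs_of_pos hμ, sq_abs]
        _ ≤ μ * eucNorm y + μ * eucNorm y := by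
            rw [← eucNorm_eq, ← eucNorm_eq]
            have h2 : μ ^ 2 * eucNorm ((Q + (μ : ℂ) • 1)⁻¹ *ᵥ y)
                = μ * (μ * eucNorm ((Q + (μ : ℂ) • 1)⁻¹ *ᵥ y)) := by ring
            have h3 : μ ^ 2 * eucNorm ((Q + (μ : ℂ) • 1)⁻¹ *ᵥ y) ≤ μ * eucNorm y := by
              rw [h2]
              exact mul_le_mul_of_nonneg_left hb hμ.le
            linarith
        _ = 2 * μ * eucNorm y := by ring
    -- tendsto of T (....) to T x
    have htend : Tendsto (fun μ : ℝ => T ((Q + (μ : ℂ) • 1)⁻¹ *ᵥ q)) (𝓝[>] (0 : ℝ)) (𝓝 (T x)) := by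
      rw [tendsto_iff_dist_tendsto_zero]
      apply squeeze_zero' (Filter.Eventually.of_forall fun μ => dist_nonneg)
      · exact eventually_mem_nhdsWithin.mono fun μ hμ => hdist μ hμ
      · have : Tendsto (fun μ : ℝ => 2 * μ * eucNorm y) (𝓝 (0 : ℝ)) (𝓝 (2 * 0 * eucNorm y)) := by
          exact ((tendsto_id.const_mul 2).mul_const _)
        simpa using this.mono_left nhdsWithin_le_nhds
    have := (htend.norm.pow 2)
    simp only [hT] at this
    simp only [← eucNorm_eq] at this
    exact this
  · -- part (b)
    rintro ⟨v, hv0, hvq⟩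
    have hvne : v ≠ 0 := by
      rintro rfl
      simp at hvq
    have hnv : 0 < eucNorm v := by
      rw [eucNorm_eq]
      have : T v ≠ 0 := by
        intro h
        exact hvne ((WithLp.equiv 2 (Fin n → ℂ)).symm.injective (h.trans rfl))
      exact norm_pos_iff.mpr this
    set c : ℝ := ‖star v ⬝ᵥ q‖ with hc
    have hcpos : 0 < c := norm_pos_iff.mpr hvq
    -- lower bound: eucNorm xμ ≥ c / (μ * eucNorm v)
    have hlow : ∀ μ : ℝ, 0 < μ →
        (c / eucNorm v) ^ 2 * (1 / μ ^ 2) ≤ (eucNorm ((Q + (μ : ℂ) • 1)⁻¹ *ᵥ q)) ^ 2 := by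
      intro μ hμ
      set xμ := (Q + (μ : ℂ) • 1)⁻¹ *ᵥ q with hxμ
      have h1 : star v ⬝ᵥ ((Q + (μ : ℂ) • 1) *ᵥ xμ) = star v ⬝ᵥ q := by
        rw [hAinv μ hμ q]
      have h2 : star v ⬝ᵥ (Q *ᵥ xμ) = 0 := by
        rw [Matrix.dotProduct_mulVec]
        have h3 : star v ᵥ* Q = star (Q *ᵥ v) := by
          conv_lhs => rw [← hQ.isHermitian.eq]
          exact (Matrix.star_mulVec Q v).symm
        rw [h3, hv0, star_zero, zero_dotProduct]
      have h4 : (μ : ℂ) * (star v ⬝ᵥ xμ) = star v ⬝ᵥ q := by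
        rw [← h1, Matrix.add_mulVec, dotProduct_add, h2, zero_add,
          Matrix.smul_mulVec, Matrix.one_mulVec, dotProduct_smul, smul_eq_mul]
      have h5 : ‖star v ⬝ᵥ xμ‖ ≤ eucNorm v * eucNorm xμ := by
        have hh : star v ⬝ᵥ xμ = inner ℂ (T v) (T xμ) :=
          by rw [dotProduct_comm]; rfl
        rw [hh, eucNorm_eq, eucNorm_eq]
        exact norm_inner_le_norm _ _
      have h6 : c = μ * ‖star v ⬝ᵥ xμ‖ := by
        rw [hc, ← h4, norm_mul, Complex.norm_real, Real.norm_eq_abs, abs_of_pos hμ]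
      have h7 : c ≤ μ * (eucNorm v * eucNorm xμ) := by
        rw [h6]
        exact mul_le_mul_of_nonneg_left h5 hμ.le
      -- rearrange
      have h8 : c / (μ * eucNorm v) ≤ eucNorm xμ := by
        rw [div_le_iff₀ (by positivity)]
        calc c ≤ μ * (eucNorm v * eucNorm xμ) := h7
          _ = eucNorm xμ * (μ * eucNorm v) := by ring
      have h9 : (c / (μ * eucNorm v)) ^ 2 ≤ (eucNorm xμ) ^ 2 := by
        have hnn : 0 ≤ c / (μ * eucNorm v) := by positivity
        exact pow_le_pow_left₀ hnn h8 2
      calc (c / eucNorm v) ^ 2 * (1 / μ ^ 2) = (c / (μ * eucNorm v)) ^ 2 := by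
            field_simp
        _ ≤ (eucNorm xμ) ^ 2 := h9
    -- the lower bound tends to atTop
    have hK : 0 < (c / eucNorm v) ^ 2 := by positivity
    have hsq2 : Tendsto (fun μ : ℝ => μ ^ 2) (𝓝[>] (0 : ℝ)) (𝓝[>] (0 : ℝ)) := by
      rw [tendsto_nhdsWithin_iff]
      constructor
      · have : Tendsto (fun μ : ℝ => μ ^ 2) (𝓝 (0 : ℝ)) (𝓝 ((0:ℝ) ^ 2)) :=
          (continuous_pow 2).tendsto 0
        simpa using this.mono_left nhdsWithin_le_nhds
      · exact eventually_mem_nhdsWithin.mono fun μ hμ => Set.mem_Ioi.mpr (pow_pos hμ 2)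
    have hinv : Tendsto (fun μ : ℝ => 1 / μ ^ 2) (𝓝[>] (0 : ℝ)) atTop := by
      simpa [one_div, Pi.inv_def] using hsq2.inv_tendsto_nhdsGT_zero
    have hg : Tendsto (fun μ : ℝ => (c / eucNorm v) ^ 2 * (1 / μ ^ 2)) (𝓝[>] (0 : ℝ)) atTop :=
      hinv.const_mul_atTop hK
    exact tendsto_atTop_mono' _ (eventually_mem_nhdsWithin.mono fun μ hμ => hlow μ hμ) hg
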